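/- For every visibly pushdown automaton A over alphabet Σ (used as an acceptor of unranked trees via their linearizations), one can construct a hedge automaton A_H over Σ such that for all unranked trees t over Σ, the linearization [t] is accepted by A if and only if t is accepted by A_H; concretely, A_H has state set Q × Q, final states Q_i × Q_f, and rules (a, L_{s,s'}, (q,q')) for every γ ∈ Γ with q –a:γ→ s ∈ Δ and s' –ā:γ→ q' ∈ Δ, where L_{s,s'} = {(s,q_1)(q_1,q_2)⋯(q_{n-1},q_n)(q_n,s') | n ≥ 0, q_1,…,q_n ∈ Q} ∪ K_{s,s'} with K_{s,s'} = {ε} if s = s' and ∅ otherwise. -/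

import Mathlib

/-- Unranked trees over alphabet `σ`: a root label and a list of subtrees. -/
inductive UTree (σ : Type) : Type where
  | node : σ → List (UTree σ) → UTree σ

namespace UTree

/-- Linearization of an unranked tree, over `σ ⊕ σ` where `Sum.inl a` is the
opening tag `a` and `Sum.inr a` is the closing tag `ā`. -/
def lin {σ : Type} : UTree σ → List (σ ⊕ σ)
  | .node a ts => Sum.inl a :: ((ts.attach.map fun x => lin x.1).flatten ++ [Sum.inr a])
decreasing_by simp only [UTree.node.sizeOf_spec]; have := List.sizeOf_lt_of_mem x.2; omega

/-- Height of a tree (number of nodes on the longest branch). -/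
def height {σ : Type} : UTree σ → ℕ
  | .node _ ts => ((ts.attach.map fun x => height x.1).foldr max 0) + 1
decreasing_by simp only [UTree.node.sizeOf_spec]; have := List.sizeOf_lt_of_mem x.2; omega

end UTree

/-- Linearization of a hedge (a finite sequence of trees). -/
def linH {σ : Type} (h : List (UTree σ)) : List (σ ⊕ σ) := (h.map UTree.lin).flatten

/-- `u` is a nonempty proper prefix of the linearization of some tree. -/
def ProperPrefix {σ : Type} (u : List (σ ⊕ σ)) : Prop :=
  ∃ (t : UTree σ) (v : List (σ ⊕ σ)), v ≠ [] ∧ u ++ v = t.lin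

/-- A visibly pushdown automaton over `σ` (calls `Sum.inl a`, returns `Sum.inr a`):
states `Q`, stack alphabet `Γ`, initial and final states, push rules
`q –a:γ→ q'` (for `a ∈ Σ`) and pop rules `q –ā:γ→ q'` (for `ā ∈ Σ̄`). -/
structure VPA (σ Q Γ : Type) where
  init : Set Q
  final : Set Q
  push : Q → σ → Γ → Q → Prop
  pop : Q → σ → Γ → Q → Prop

namespace VPA

/-- One step between configurations (a configuration is a pair `(q, σ) ∈ Q × Γ*`). -/
def Step {σ Q Γ : Type} (A : VPA σ Q Γ) :
    (Q × List Γ) → (σ ⊕ σ) → (Q × List Γ) → Prop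
  | c, Sum.inl a, c' => ∃ γ, A.push c.1 a γ c'.1 ∧ c'.2 = γ :: c.2
  | c, Sum.inr a, c' => ∃ γ, A.pop c.1 a γ c'.1 ∧ c.2 = γ :: c'.2

/-- Extension of `Step` to words over `σ ⊕ σ`. -/
def Steps {σ Q Γ : Type} (A : VPA σ Q Γ) :
    (Q × List Γ) → List (σ ⊕ σ) → (Q × List Γ) → Prop
  | c, [], c' => c = c'
  | c, x :: w, c'' => ∃ c', A.Step c x c' ∧ A.Steps c' w c''

/-- A word is accepted if it leads from some initial configuration `(q_i, ε)` to
some final configuration `(q_f, ε)`. -/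
def AcceptsWord {σ Q Γ : Type} (A : VPA σ Q Γ) (w : List (σ ⊕ σ)) : Prop :=
  ∃ qi ∈ A.init, ∃ qf ∈ A.final, A.Steps (qi, []) w (qf, [])

/-- A tree is accepted if its linearization is. -/
def AcceptsTree {σ Q Γ : Type} (A : VPA σ Q Γ) (t : UTree σ) : Prop :=
  A.AcceptsWord t.lin

end VPA

/-- A hedge automaton: final states and rules `(a, L, q)` with a horizontal
language `L ⊆ Q*`. -/
structure HedgeAutomaton (σ Q : Type) where
  final : Set Q
  rules : Set (σ × Set (List Q) × Q)

/-- `HEval A t q` holds iff some run of `A` on `t` labels the root of `t` by `q`. -/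
inductive HEval {σ Q : Type} (A : HedgeAutomaton σ Q) : UTree σ → Q → Prop
  | node {a : σ} {ts : List (UTree σ)} {q : Q} {L : Set (List Q)} {qs : List Q} :
      (a, L, q) ∈ A.rules → qs ∈ L → qs.length = ts.length →
      (∀ p ∈ ts.zip qs, HEval A p.1 p.2) → HEval A (UTree.node a ts) q

/-- A tree is accepted if some run labels its root by a final state. -/
def accepted {σ Q : Type} (A : HedgeAutomaton σ Q) (t : UTree σ) : Prop :=
  ∃ q ∈ A.final, HEval A t q

/-- All horizontal languages of `A` are regular. -/
def RegularHA {σ Q : Type} (A : HedgeAutomaton σ Q) : Prop :=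
  ∀ r ∈ A.rules, Language.IsRegular (r.2.1 : Language Q)

/-- The words `p₁⋯pₙ` of a macrostate word `P₁⋯Pₙ`, with `pᵢ ∈ Pᵢ` for all `i`. -/
def wordsOf {Q : Type} (π : List (Set Q)) : Set (List Q) :=
  {w | List.Forall₂ (· ∈ ·) w π}

/-- `Post_a(π)` for a macrostate word `π`. -/
def postA {σ Q : Type} (A : HedgeAutomaton σ Q) (a : σ) (π : List (Set Q)) : Set Q :=
  {q | ∃ L : Set (List Q), (a, L, q) ∈ A.rules ∧ (L ∩ wordsOf π).Nonempty}

/-- The macrostate `P_t = {q | t →A q}` of a tree `t`. -/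
def Pt {σ Q : Type} (A : HedgeAutomaton σ Q) (t : UTree σ) : Set Q := {q | HEval A t q}

/-- The macrostate word `π_h = P_{t₁}⋯P_{tₙ}` of a hedge `h = t₁⋯tₙ`. -/
def pih {σ Q : Type} (A : HedgeAutomaton σ Q) (h : List (UTree σ)) : List (Set Q) :=
  h.map (Pt A)

/-- Chains: `chainFrom s s' l` holds iff `l = (s,q₁)(q₁,q₂)⋯(qₙ,s')` for some `n ≥ 0`,
or `l = ε` and `s = s'`.  Thus `{l | chainFrom s s' l}` is the language `L_{s,s'}`. -/
def chainFrom {Q : Type} : Q → Q → List (Q × Q) → Prop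
  | s, s', [] => s = s'
  | s, s', p :: l => p.1 = s ∧ chainFrom p.2 s' l

/-- The hedge automaton `A_H` constructed from the VPA `A`: states `Q × Q`, final
states `Q_i × Q_f`, and a rule `(a, L_{s,s'}, (q,q'))` for every `γ ∈ Γ` with
`q –a:γ→ s ∈ Δ` and `s' –ā:γ→ q' ∈ Δ`. -/
def VPAtoHedge {σ Q Γ : Type} (A : VPA σ Q Γ) : HedgeAutomaton σ (Q × Q) where
  final := A.init ×ˢ A.final
  rules := {r | ∃ (a : σ) (γ : Γ) (q q' s s' : Q),
      A.push q a γ s ∧ A.pop s' a γ q' ∧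
      r = (a, {l : List (Q × Q) | chainFrom s s' l}, (q, q'))}

section Aux

variable {σ Q Γ : Type}

theorem steps_append (A : VPA σ Q Γ) (u : List (σ ⊕ σ)) :
    ∀ (v : List (σ ⊕ σ)) c c'', A.Steps c (u ++ v) c'' ↔
      ∃ c', A.Steps c u c' ∧ A.Steps c' v c'' := by
  induction u with
  | nil => intro v c c''; simp [VPA.Steps]
  | cons x u ih =>
    intro v c c''
    simp only [List.cons_append, VPA.Steps]
    constructor
    · rintro ⟨c1, h1, h2⟩
      obtain ⟨cm, hu, hv⟩ := (ih v c1 c'').mp h2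
      exact ⟨cm, ⟨c1, h1, hu⟩, hv⟩
    · rintro ⟨cm, ⟨c1, h1, hu⟩, hv⟩
      exact ⟨c1, h1, (ih v c1 c'').mpr ⟨cm, hu, hv⟩⟩

theorem lin_node (a : σ) (ts : List (UTree σ)) :
    (UTree.node a ts).lin = Sum.inl a :: (linH ts ++ [Sum.inr a]) := by
  rw [UTree.lin]
  simp [linH, List.attach_map_val]

theorem linH_cons (t : UTree σ) (hs : List (UTree σ)) :
    linH (t :: hs) = t.lin ++ linH hs := by simp [linH]

mutual

theorem fwdT (A : VPA σ Q Γ) :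
    ∀ (t : UTree σ) (q : Q) (st : List Γ) (q' : Q) (st' : List Γ),
      A.Steps (q, st) t.lin (q', st') →
        st' = st ∧ HEval (VPAtoHedge A) t (q, q')
  | UTree.node a ts, q, st, q', st', h => by
    rw [lin_node] at h
    simp only [VPA.Steps] at h
    obtain ⟨c1, hstep, hrest⟩ := h
    obtain ⟨γ, hpush, hstk1⟩ := hstep
    obtain ⟨c2, hmid, hlast⟩ := (steps_append A _ _ _ _).mp hrest
    simp only [VPA.Steps, VPA.Step] at hlast
    obtain ⟨c3, ⟨γ', hpop, hstk2⟩, hc3⟩ := hlast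
    obtain ⟨s, stk1⟩ := c1
    obtain ⟨s', stk2⟩ := c2
    simp only at hpush hstk1 hpop hstk2 hc3
    subst hstk1
    obtain ⟨hstkeq, qs, hchain, hlen, hev⟩ := fwdH A ts s (γ :: st) s' stk2 hmid
    subst hstkeq
    rw [hc3] at hpop hstk2
    simp only at hpop hstk2
    injection hstk2 with hγ hst
    refine ⟨hst.symm, ?_⟩
    subst hγ
    exact HEval.node (L := {l : List (Q × Q) | chainFrom s s' l})
      ⟨a, γ, q, q', s, s', hpush, hpop, rfl⟩ hchain hlen hev
termination_by t _ _ _ _ _ => sizeOf t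

theorem fwdH (A : VPA σ Q Γ) :
    ∀ (hs : List (UTree σ)) (q : Q) (st : List Γ) (q' : Q) (st' : List Γ),
      A.Steps (q, st) (linH hs) (q', st') →
        st' = st ∧ ∃ qs : List (Q × Q), chainFrom q q' qs ∧ qs.length = hs.length ∧
          ∀ p ∈ hs.zip qs, HEval (VPAtoHedge A) p.1 p.2
  | [], q, st, q', st', h => by
    simp only [linH, List.map_nil, List.flatten_nil, VPA.Steps, Prod.mk.injEq] at h
    obtain ⟨hq, hst⟩ := h
    exact ⟨hst.symm, [], hq, rfl, by simp⟩
  | t :: hs, q, st, q', st', h => by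
    rw [linH_cons] at h
    obtain ⟨c, h1, h2⟩ := (steps_append A _ _ _ _).mp h
    obtain ⟨m, stm⟩ := c
    obtain ⟨hstm, hevt⟩ := fwdT A t q st m stm h1
    obtain ⟨hst', qs, hchain, hlen, hev⟩ := fwdH A hs m stm q' st' h2
    refine ⟨hst'.trans hstm, (q, m) :: qs, ⟨rfl, hchain⟩, by simp [hlen], ?_⟩
    intro p hp
    simp only [List.zip_cons_cons, List.mem_cons] at hp
    rcases hp with rfl | hp
    · exact hevt
    · exact hev p hp
termination_by hs _ _ _ _ _ => sizeOf hs

end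

theorem bwdH (A : VPA σ Q Γ) :
    ∀ (hs : List (UTree σ)) (qs : List (Q × Q)) (s s' : Q),
      chainFrom s s' qs → qs.length = hs.length →
      (∀ p ∈ hs.zip qs, ∀ st, A.Steps (p.2.1, st) p.1.lin (p.2.2, st)) →
      ∀ st, A.Steps (s, st) (linH hs) (s', st) := by
  intro hs
  induction hs with
  | nil =>
    rintro ⟨⟩ s s' hchain hlen _ st
    · simpa [linH, VPA.Steps] using congrArg (fun x => (x, st)) hchain
    · simp at hlen
  | cons t hs ih =>
    rintro ⟨⟩ s s' hchain hlen hev st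
    · simp at hlen
    · rename_i p qs
      obtain ⟨hp1, hchain'⟩ := hchain
      rw [linH_cons]
      refine (steps_append A _ _ _ _).mpr ⟨(p.2, st), ?_, ?_⟩
      · have := hev (t, p) (by simp) st
        rw [hp1] at this
        exact this
      · exact ih qs p.2 s' hchain' (by simpa using hlen)
          (fun r hr => hev r (by simp [hr])) st

theorem bwdT (A : VPA σ Q Γ) :
    ∀ {t : UTree σ} {p : Q × Q}, HEval (VPAtoHedge A) t p →
      ∀ st, A.Steps (p.1, st) t.lin (p.2, st) := by
  intro t p h
  induction h with
  | @node a ts pr L qs hrule hqs hlen _ ih =>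
    obtain ⟨a', γ, q0, q0', s, s', hpush, hpop, heq⟩ := hrule
    injection heq with ha hrest
    injection hrest with hL' hq
    subst ha
    intro st
    rw [lin_node]
    simp only [VPA.Steps]
    refine ⟨(s, γ :: st), ⟨γ, by simp [hq, hpush], rfl⟩, ?_⟩
    refine (steps_append A _ _ _ _).mpr ⟨(s', γ :: st), ?_, ?_⟩
    · have hqs' : chainFrom s s' qs := by
        have : qs ∈ {l : List (Q × Q) | chainFrom s s' l} := hL' ▸ hqs
        exact this
      exact bwdH A ts qs s s' hqs' hlen ih (γ :: st)
    · exact ⟨(pr.2, st), ⟨γ, by simp [hq, hpop], rfl⟩, rfl⟩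

end Aux

/-- Theorem 1: for every VPA `A`, the constructed hedge automaton
`A_H = VPAtoHedge A` satisfies: for all unranked trees `t`, the linearization `[t]`
is accepted by `A` iff `t` is accepted by `A_H`. -/
theorem vpa_to_hedge_correct {σ Q Γ : Type} [Fintype σ] [Fintype Q] [Fintype Γ]
    (A : VPA σ Q Γ) (t : UTree σ) :
    A.AcceptsWord t.lin ↔ accepted (VPAtoHedge A) t := by
  constructor
  · rintro ⟨qi, hqi, qf, hqf, hst⟩
    exact ⟨(qi, qf), ⟨hqi, hqf⟩, (fwdT A t qi [] qf [] hst).2⟩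
  · rintro ⟨⟨q, q'⟩, ⟨hq, hq'⟩, hev⟩
    exact ⟨q, hq, q', hq', bwdT A hev []⟩
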